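/- Let δ > 0 and τ > 0. The point (A, ζ₄) = (0, 1 + δ) is an equilibrium of the coupled system (f₁ = f₂ = 0 there), and the Jacobian of (f₁, f₂) at this point is the diagonal matrix diag(−δ/4, −1/τ), whose eigenvalues −δ/4 and −1/τ are both negative; hence the trivial equilibrium is a hyperbolic sink for all δ, τ > 0. -/

import Mathlib

open Matrix

/-- Right-hand side of the slow-flow amplitude equation for the 4-node network. -/
noncomputable def f₁ (A ζ₄ : ℝ) : ℝ :=
  (1 / 4) * ((1 - ζ₄) * A + 5 / 4 * A ^ 3 - 5 / 16 * A ^ 5)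

/-- Right-hand side of the autonomous damping dynamics for the 4-node network. -/
noncomputable def f₂ (δ τ A ζ₄ : ℝ) : ℝ :=
  τ⁻¹ * (-ζ₄ + δ + 1 + 5 / 8 * A ^ 2)

/-- Jacobian matrix of the planar vector field `(f₁, f₂)` with respect to `(A, ζ₄)`. -/
noncomputable def J (δ τ A ζ₄ : ℝ) : Matrix (Fin 2) (Fin 2) ℝ :=
  !![deriv (fun a => f₁ a ζ₄) A, deriv (fun z => f₁ A z) ζ₄;
     deriv (fun a => f₂ δ τ a ζ₄) A, deriv (fun z => f₂ δ τ A z) ζ₄]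

lemma d11 (ζ₄ A : ℝ) : deriv (fun a => f₁ a ζ₄) A
    = (1/4) * ((1 - ζ₄) + 5/4 * (3 * A ^ 2) - 5/16 * (5 * A ^ 4)) := by
  unfold f₁
  have : deriv (fun a : ℝ => (1 / 4) * ((1 - ζ₄) * a + 5 / 4 * a ^ 3 - 5 / 16 * a ^ 5)) A
      = (1/4) * ((1 - ζ₄) * 1 + 5/4 * (3 * A ^ 2 * 1) - 5/16 * (5 * A ^ 4 * 1)) := by
    apply HasDerivAt.deriv
    have h := ((((hasDerivAt_id A).const_mul (1 - ζ₄)).add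
      (((hasDerivAt_id A).pow 3).const_mul (5/4 : ℝ))).sub
      (((hasDerivAt_id A).pow 5).const_mul (5/16 : ℝ))).const_mul (1/4 : ℝ)
    simpa using h
  rw [this]; ring

lemma d12 (A ζ₄ : ℝ) : deriv (fun z => f₁ A z) ζ₄ = -(1/4) * A := by
  unfold f₁
  have : deriv (fun z : ℝ => (1 / 4) * ((1 - z) * A + 5 / 4 * A ^ 3 - 5 / 16 * A ^ 5)) ζ₄
      = (1/4) * ((0 - 1) * A) := by
    apply HasDerivAt.deriv
    have h := (((((hasDerivAt_const ζ₄ (1:ℝ)).sub (hasDerivAt_id ζ₄)).mul_const A).add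
      (hasDerivAt_const ζ₄ (5/4 * A ^ 3))).sub
      (hasDerivAt_const ζ₄ (5/16 * A ^ 5))).const_mul (1/4 : ℝ)
    simpa using h
  rw [this]; ring

lemma d21 (δ τ ζ₄ A : ℝ) : deriv (fun a => f₂ δ τ a ζ₄) A = τ⁻¹ * (5/8 * (2 * A)) := by
  unfold f₂
  apply HasDerivAt.deriv
  have h := ((hasDerivAt_const A (-ζ₄ + δ + 1)).add
    (((hasDerivAt_id A).pow 2).const_mul (5/8 : ℝ))).const_mul τ⁻¹
  simpa [mul_comm] using h

lemma d22 (δ τ A ζ₄ : ℝ) : deriv (fun z => f₂ δ τ A z) ζ₄ = -τ⁻¹ := by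
  unfold f₂
  apply HasDerivAt.deriv
  have h := ((((hasDerivAt_id ζ₄).neg.add_const δ).add_const (1:ℝ)).add_const
    (5/8 * A ^ 2)).const_mul τ⁻¹
  simpa using h

theorem stmt_7 (δ τ : ℝ) (hδ : 0 < δ) (hτ : 0 < τ) :
    f₁ 0 (1 + δ) = 0 ∧ f₂ δ τ 0 (1 + δ) = 0 ∧
    J δ τ 0 (1 + δ) = !![-δ / 4, 0; 0, -1 / τ] ∧
    (-δ / 4 : ℝ) < 0 ∧ (-1 / τ : ℝ) < 0 := by
  refine ⟨by simp [f₁], by simp [f₂], ?_, by linarith, ?_⟩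
  · unfold _root_.J
    rw [d11, d12, d21, d22]
    norm_num
    ring_nf
    exact ⟨trivial, trivial⟩
  · rw [div_neg_iff]; right; exact ⟨by norm_num, hτ⟩
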